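/- If a family of pairwise nonintersecting t-dimensional subspaces of GF(q)^m has size (q^m - 1)/(q^t - 1), then t divides m. -/
import Mathlib

open Finset Module

theorem stmt_2 (q t m : ℕ) (ht : 1 ≤ t) (htm : t ≤ m)
    (F : Type*) [Field F] [Fintype F] (hq : Fintype.card F = q)
    (S : Finset (Submodule F (Fin m → F)))
    (hdim : ∀ W ∈ S, Module.finrank F W = t)
    (hpair : ∀ W ∈ S, ∀ W' ∈ S, W ≠ W' → W ⊓ W' = ⊥)
    (hcard : S.card = (q ^ m - 1) / (q ^ t - 1)) :
    t ∣ m := by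
  classical
  by_cases hr0 : m % t = 0
  · exact Nat.dvd_of_mod_eq_zero hr0
  exfalso
  have hq2 : 2 ≤ q := hq ▸ Fintype.one_lt_card
  set r := m % t with hrdef
  set a := m / t with hadef
  have hrt : r < t := Nat.mod_lt _ (by omega)
  have hm : m = t * a + r := (Nat.div_add_mod m t).symm
  have ht2 : 2 ≤ t := by
    rcases (by omega : t = 1 ∨ 2 ≤ t) with h | h
    · exact absurd (by simp [hrdef, h, Nat.mod_one]) hr0
    · exact h
  have ha : 1 ≤ a := by
    have := Nat.one_le_div_iff (by omega : 0 < t) |>.mpr htm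
    simpa [hadef] using this
  set N := S.card with hNdef
  set K := q ^ r * ∑ i ∈ Finset.range a, (q ^ t) ^ i with hKdef
  -- integer identity for K
  have hKint : (K : ℤ) * ((q:ℤ)^t - 1) = (q:ℤ)^m - (q:ℤ)^r := by
    have g := geom_sum_mul ((q:ℤ)^t) a
    have hK : (K : ℤ) = (q:ℤ)^r * ∑ i ∈ Finset.range a, ((q:ℤ)^t) ^ i := by
      rw [hKdef]; push_cast; ring
    rw [hK, hm]
    linear_combination ((q:ℤ)^r) * g
  have h1m : 1 ≤ q ^ m := Nat.one_le_pow _ _ (by omega)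
  have h1t : 1 ≤ q ^ t := Nat.one_le_pow _ _ (by omega)
  have h1r : 1 ≤ q ^ r := Nat.one_le_pow _ _ (by omega)
  have hNatId : q ^ m - 1 = (q ^ t - 1) * K + (q ^ r - 1) := by
    zify [h1m, h1t, h1r]
    linear_combination -hKint
  have hrtlt : q ^ r - 1 < q ^ t - 1 := by
    have : q ^ r < q ^ t := Nat.pow_lt_pow_right hq2 hrt
    omega
  have hNK : N = K := by
    rw [hcard, hNatId, Nat.mul_add_div (by omega : 0 < q ^ t - 1),
      Nat.div_eq_of_lt hrtlt]
    omega
  -- cardinality of nonzero points of a submodule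
  have hcardU : ∀ U : Submodule F (Fin m → F),
      (Finset.univ.filter (fun v => v ∈ U ∧ v ≠ 0)).card = q ^ (Module.finrank F U) - 1 := by
    intro U
    have h0 : (0 : Fin m → F) ∈ Finset.univ.filter (fun v => v ∈ U) := by
      simp [U.zero_mem]
    have he : Finset.univ.filter (fun v : Fin m → F => v ∈ U ∧ v ≠ 0)
        = (Finset.univ.filter (fun v => v ∈ U)).erase 0 := by
      ext v; simp [Finset.mem_erase, and_comm]
    have hcU : (Finset.univ.filter (fun v : Fin m → F => v ∈ U)).card = Fintype.card U := by
      rw [Fintype.card_subtype]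
    rw [he, Finset.card_erase_of_mem h0, hcU, card_eq_pow_finrank (K := F), hq]
  -- the partition counting lemma
  have hcount : ∀ Y : Submodule F (Fin m → F),
      (Finset.univ.filter (fun v => v ∈ Y ∧ v ≠ 0)).card
        = (∑ W ∈ S, (Finset.univ.filter (fun v : Fin m → F => v ∈ W ⊓ Y ∧ v ≠ 0)).card)
          + (Finset.univ.filter
              (fun v : Fin m → F => v ∈ Y ∧ (v ≠ 0 ∧ ∀ W ∈ S, v ∉ W))).card := by
    intro Y
    have hdisj : ∀ W ∈ S, ∀ W' ∈ S, W ≠ W' →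
        Disjoint (Finset.univ.filter (fun v : Fin m → F => v ∈ W ⊓ Y ∧ v ≠ 0))
          (Finset.univ.filter (fun v : Fin m → F => v ∈ W' ⊓ Y ∧ v ≠ 0)) := by
      intro W hW W' hW' hne
      rw [Finset.disjoint_left]
      intro v hv hv'
      simp only [Finset.mem_filter, Finset.mem_univ, true_and, Submodule.mem_inf] at hv hv'
      have : v ∈ W ⊓ W' := ⟨hv.1.1, hv'.1.1⟩
      rw [hpair W hW W' hW' hne] at this
      exact hv.2 (by simpa using this)
    rw [← Finset.card_biUnion hdisj]
    have hdis2 : Disjoint (S.biUnion (fun W =>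
          Finset.univ.filter (fun v : Fin m → F => v ∈ W ⊓ Y ∧ v ≠ 0)))
        (Finset.univ.filter (fun v : Fin m → F => v ∈ Y ∧ (v ≠ 0 ∧ ∀ W ∈ S, v ∉ W))) := by
      rw [Finset.disjoint_left]
      intro v hv hv'
      simp only [Finset.mem_biUnion, Finset.mem_filter, Finset.mem_univ, true_and,
        Submodule.mem_inf] at hv hv'
      obtain ⟨W, hW, ⟨hvW, _⟩, _⟩ := hv
      exact hv'.2.2 W hW hvW
    rw [← Finset.card_union_of_disjoint hdis2]
    congr 1
    ext v
    simp only [Finset.mem_filter, Finset.mem_univ, true_and, Finset.mem_union,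
      Finset.mem_biUnion, Submodule.mem_inf]
    constructor
    · rintro ⟨hvY, hv0⟩
      by_cases hex : ∃ W ∈ S, v ∈ W
      · obtain ⟨W, hW, hvW⟩ := hex
        exact Or.inl ⟨W, hW, ⟨hvW, hvY⟩, hv0⟩
      · push_neg at hex
        exact Or.inr ⟨hvY, hv0, hex⟩
    · rintro (⟨W, hW, ⟨_, hvY⟩, hv0⟩ | ⟨hvY, hv0, _⟩) <;> exact ⟨hvY, hv0⟩
  -- total count: size of the hole set
  set H := Finset.univ.filter (fun v : Fin m → F => v ≠ 0 ∧ ∀ W ∈ S, v ∉ W) with hHdef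
  have htopc := hcount ⊤
  have hfrtop : Module.finrank F (⊤ : Submodule F (Fin m → F)) = m := by
    rw [finrank_top, Module.finrank_fin_fun]
  have hsumtop : ∑ W ∈ S, (Finset.univ.filter
      (fun v : Fin m → F => v ∈ W ⊓ ⊤ ∧ v ≠ 0)).card = N * (q ^ t - 1) := by
    rw [Finset.sum_congr rfl (fun W hW => ?_)]
    · rw [Finset.sum_const, smul_eq_mul]
    · rw [hcardU (W ⊓ ⊤), inf_top_eq, hdim W hW]
  have hholetop : (Finset.univ.filter
      (fun v : Fin m → F => v ∈ (⊤ : Submodule F (Fin m → F)) ∧ (v ≠ 0 ∧ ∀ W ∈ S, v ∉ W)))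
      = H := by
    ext v; simp [hHdef]
  rw [hcardU ⊤, hfrtop, hsumtop, hholetop] at htopc
  have hH : H.card = q ^ r - 1 := by
    rw [hNK, mul_comm] at htopc
    omega
  -- pick a hole
  have hHne : H.Nonempty := by
    rw [← Finset.card_pos, hH]
    have : q ≤ q ^ r := Nat.le_self_pow (by omega) q
    omega
  obtain ⟨h0, hh0⟩ := hHne
  simp only [hHdef, Finset.mem_filter, Finset.mem_univ, true_and] at hh0
  obtain ⟨hh0ne, hh0holes⟩ := hh0
  obtain ⟨i, hi⟩ : ∃ i, h0 i ≠ 0 := by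
    by_contra hcon
    push_neg at hcon
    exact hh0ne (funext hcon)
  -- the hyperplane
  set Y := LinearMap.ker (LinearMap.proj i : (Fin m → F) →ₗ[F] F) with hYdef
  have hsurj : Function.Surjective (LinearMap.proj i : (Fin m → F) →ₗ[F] F) := by
    intro c
    exact ⟨Pi.single i c, by simp⟩
  have hYrank : Module.finrank F Y = m - 1 := by
    have hr := LinearMap.finrank_range_add_finrank_ker
      (LinearMap.proj i : (Fin m → F) →ₗ[F] F)
    rw [LinearMap.range_eq_top.mpr hsurj, finrank_top, Module.finrank_fin_fun,
      Module.finrank_self, ← hYdef] at hr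
    omega
  -- dimension bounds for W ⊓ Y
  have hd : ∀ W ∈ S, t - 1 ≤ Module.finrank F ↥(W ⊓ Y) ∧ Module.finrank F ↥(W ⊓ Y) ≤ t := by
    intro W hW
    constructor
    · have heq := Submodule.finrank_sup_add_finrank_inf_eq W Y
      have h1 : Module.finrank F ↥(W ⊔ Y) ≤ m := by
        have := Submodule.finrank_le (W ⊔ Y)
        rwa [Module.finrank_fin_fun] at this
      rw [hdim W hW, hYrank] at heq
      omega
    · have := Submodule.finrank_mono (inf_le_left : W ⊓ Y ≤ W)
      rwa [hdim W hW] at this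
  -- the hyperplane count
  set HY := Finset.univ.filter
      (fun v : Fin m → F => v ∈ Y ∧ (v ≠ 0 ∧ ∀ W ∈ S, v ∉ W)) with hHYdef
  have hcY := hcount Y
  rw [hcardU Y, hYrank] at hcY
  simp only [hcardU] at hcY
  -- cast to ℤ
  have e1 : ((∑ W ∈ S, (q ^ Module.finrank F ↥(W ⊓ Y) - 1) : ℕ) : ℤ)
      = ∑ W ∈ S, ((q:ℤ) ^ Module.finrank F ↥(W ⊓ Y) - 1) := by
    rw [Nat.cast_sum]
    refine Finset.sum_congr rfl fun W _ => ?_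
    have h1 : 1 ≤ q ^ Module.finrank F ↥(W ⊓ Y) := Nat.one_le_pow _ _ (by omega)
    rw [Nat.cast_sub h1, Nat.cast_pow, Nat.cast_one]
  have h1m1 : 1 ≤ q ^ (m - 1) := Nat.one_le_pow _ _ (by omega)
  have hZ : ((q:ℤ)^(m-1) - 1)
      = (∑ W ∈ S, ((q:ℤ) ^ Module.finrank F ↥(W ⊓ Y) - 1)) + (HY.card : ℤ) := by
    have h2 := congrArg (Nat.cast (R := ℤ)) hcY
    rw [Nat.cast_add, e1, Nat.cast_sub h1m1, Nat.cast_pow] at h2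
    exact h2
  -- divisibility
  have hdvd1 : ((q:ℤ)^(t-1)) ∣ (∑ W ∈ S, ((q:ℤ) ^ Module.finrank F ↥(W ⊓ Y) - 1)) + N := by
    have hs : (∑ W ∈ S, ((q:ℤ) ^ Module.finrank F ↥(W ⊓ Y) - 1)) + N
        = ∑ W ∈ S, (q:ℤ) ^ Module.finrank F ↥(W ⊓ Y) := by
      rw [Finset.sum_sub_distrib, Finset.sum_const, nsmul_eq_mul, mul_one, hNdef]
      ring
    rw [hs]
    exact Finset.dvd_sum fun W hW => pow_dvd_pow _ (hd W hW).1
  have hdvdN : ((q:ℤ)^(t-1)) ∣ (N:ℤ) - (q:ℤ)^r := by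
    obtain ⟨b, hb⟩ : ∃ b, a = b + 1 := ⟨a - 1, by omega⟩
    have hKZ : (K:ℤ) = (q:ℤ)^r * ((q:ℤ)^t * ∑ i ∈ Finset.range b, ((q:ℤ)^t)^i + 1) := by
      rw [hKdef, hb]
      push_cast
      rw [geom_sum_succ]
    have h5 : (K:ℤ) - (q:ℤ)^r
        = (q:ℤ)^t * ((q:ℤ)^r * ∑ i ∈ Finset.range b, ((q:ℤ)^t)^i) := by
      rw [hKZ]; ring
    rw [hNK, h5]
    exact (pow_dvd_pow (q:ℤ) (by omega : t - 1 ≤ t)).mul_right _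
  have hdvdm1 : ((q:ℤ)^(t-1)) ∣ (q:ℤ)^(m-1) := pow_dvd_pow _ (by omega)
  have hA : ((q:ℤ)^(t-1)) ∣ (HY.card : ℤ) - ((q:ℤ)^r - 1) := by
    have e : (HY.card:ℤ) - ((q:ℤ)^r - 1)
        = ((q:ℤ)^(m-1) - ((∑ W ∈ S, ((q:ℤ) ^ Module.finrank F ↥(W ⊓ Y) - 1)) + (N:ℤ)))
          + ((N:ℤ) - (q:ℤ)^r) := by
      linear_combination -hZ
    rw [e]
    exact dvd_add (dvd_sub hdvdm1 hdvd1) hdvdN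
  have hsub : HY ⊆ H := by
    intro v hv
    simp only [hHYdef, hHdef, Finset.mem_filter, Finset.mem_univ, true_and] at hv ⊢
    exact hv.2
  have hle : HY.card ≤ q ^ r - 1 := hH ▸ Finset.card_le_card hsub
  have hpowle : q ^ r ≤ q ^ (t - 1) := Nat.pow_le_pow_right (by omega) (by omega)
  have habs : |(HY.card:ℤ) - ((q:ℤ)^r - 1)| < (q:ℤ)^(t-1) := by
    have b1 : (HY.card:ℤ) ≤ (q:ℤ)^r - 1 := by
      have := (Nat.cast_le (α := ℤ)).mpr hle
      rwa [Nat.cast_sub h1r, Nat.cast_pow, Nat.cast_one] at this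
    have b2 : (0:ℤ) ≤ (HY.card:ℤ) := Nat.cast_nonneg _
    have b3 : (q:ℤ)^r ≤ (q:ℤ)^(t-1) := by exact_mod_cast hpowle
    have b4 : (1:ℤ) ≤ (q:ℤ)^r := by exact_mod_cast h1r
    rw [abs_lt]
    constructor <;> linarith
  have hzero := Int.eq_zero_of_abs_lt_dvd hA habs
  have hHYcard : HY.card = q ^ r - 1 := by
    have h3 : (HY.card:ℤ) = (q:ℤ)^r - 1 := by linarith
    have h2 : ((q ^ r - 1 : ℕ):ℤ) = (q:ℤ)^r - 1 := by
      rw [Nat.cast_sub h1r, Nat.cast_pow, Nat.cast_one]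
    exact_mod_cast h3.trans h2.symm
  have hHeq : HY = H := Finset.eq_of_subset_of_card_le hsub (by rw [hH, hHYcard])
  have hh0Y : h0 ∈ Y := by
    have hmem : h0 ∈ HY := by
      rw [hHeq]
      simp only [hHdef, Finset.mem_filter, Finset.mem_univ, true_and]
      exact ⟨hh0ne, hh0holes⟩
    simp only [hHYdef, Finset.mem_filter] at hmem
    exact hmem.2.1
  have hker : (LinearMap.proj i : (Fin m → F) →ₗ[F] F) h0 = 0 := by
    rw [hYdef, LinearMap.mem_ker] at hh0Y
    exact hh0Y
  exact hi (by simpa using hker)
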